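/- arXiv:2402.14478 — 2 statements merged into one kernel-verified Lean document; each statement's English description precedes it below -/
import Mathlib

section
/- Let f be analytic and 2π-periodic on the strip {θ : |Im θ| < s} with sup-norm |f|_s. Then for the truncation T_K f = Σ_{|k| ≤ K} f_k e^{i⟨k,θ⟩} and any 0 < σ ≤ s with Kσ ≥ n, one has |f − T_K f|_{s−σ} ≤ c K^n e^{−Kσ} |f|_s, where c is a constant depending only on n. -/
open Real

lemma inv_one_sub_exp_le (τ : ℝ) (hτ : 0 < τ) : (1 - Real.exp (-τ))⁻¹ ≤ 1 + 1/τ := by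
  have hr : Real.exp (-τ) < 1 := Real.exp_lt_one_iff.mpr (by linarith)
  have hr0 : 0 < Real.exp (-τ) := Real.exp_pos _
  have h1 : 0 < 1 - Real.exp (-τ) := by linarith
  rw [inv_le_iff_one_le_mul₀ h1]
  have h2 : τ + 1 ≤ Real.exp τ := Real.add_one_le_exp τ
  have h3 : Real.exp (-τ) * Real.exp τ = 1 := by
    rw [← Real.exp_add]; simp
  have h4 : (τ + 1) * Real.exp (-τ) ≤ 1 := by nlinarith
  have hkey : 0 ≤ 1 - Real.exp (-τ) - τ * Real.exp (-τ) := by nlinarith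
  have h7 : (1/τ) * (τ * Real.exp (-τ)) = Real.exp (-τ) := by field_simp
  have hA : 0 ≤ (1/τ) * (1 - Real.exp (-τ) - τ * Real.exp (-τ)) :=
    mul_nonneg (by positivity) hkey
  nlinarith [hA, h7]

lemma sum_exp_abs_le (τ : ℝ) (hτ : 0 < τ) (T : Finset ℤ) :
    ∑ j ∈ T, Real.exp (-(|j| : ℝ) * τ) ≤ 2 + 2/τ := by
  have hr0 : (0:ℝ) ≤ Real.exp (-τ) := (Real.exp_pos _).le
  have hr1 : Real.exp (-τ) < 1 := Real.exp_lt_one_iff.mpr (by linarith)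
  have hterm : ∀ j : ℤ, Real.exp (-(|j| : ℝ) * τ) = Real.exp (-τ) ^ j.natAbs := by
    intro j
    rw [← Real.exp_nat_mul]
    congr 1
    rw [Nat.cast_natAbs]
    push_cast
    ring
  have hsumm : Summable (fun m : ℕ => Real.exp (-τ) ^ m) := summable_geometric_of_lt_one hr0 hr1
  have hbound : ∀ (P : Finset ℤ) (φ : ℤ → ℕ), (∀ x ∈ P, ∀ y ∈ P, φ x = φ y → x = y) →
      (∀ j ∈ P, φ j = j.natAbs) →
      ∑ j ∈ P, Real.exp (-(|j| : ℝ) * τ) ≤ (1 - Real.exp (-τ))⁻¹ := by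
    intro P φ hinj hφ
    calc ∑ j ∈ P, Real.exp (-(|j| : ℝ) * τ) = ∑ m ∈ P.image φ, Real.exp (-τ) ^ m := by
          rw [Finset.sum_image hinj]
          exact Finset.sum_congr rfl fun j hj => by rw [hterm, hφ j hj]
      _ ≤ ∑' m : ℕ, Real.exp (-τ) ^ m := Summable.sum_le_tsum _ (fun i _ => by positivity) hsumm
      _ = (1 - Real.exp (-τ))⁻¹ := tsum_geometric_of_lt_one hr0 hr1
  have h3 := inv_one_sub_exp_le τ hτ
  rw [← Finset.sum_filter_add_sum_filter_not T (fun j => 0 ≤ j)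
        (fun j => Real.exp (-(|j| : ℝ) * τ))]
  have h4 : 2/τ = (1/τ) + (1/τ) := by ring
  refine le_trans (add_le_add
    (hbound _ Int.toNat ?_ ?_) (hbound _ (fun j => (-j).toNat) ?_ ?_)) (by linarith)
  · intro x hx y hy hxy
    simp only [Finset.mem_filter] at hx hy
    omega
  · intro j hj
    simp only [Finset.mem_filter] at hj
    omega
  · intro x hx y hy hxy
    simp only [Finset.mem_filter] at hx hy
    omega
  · intro j hj
    simp only [Finset.mem_filter] at hj
    omega

lemma sum_pi_exp_le (n : ℕ) (τ : ℝ) (hτ : 0 < τ) (S : Finset (Fin n → ℤ)) :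
    ∑ k ∈ S, Real.exp (-(∑ i, (|k i| : ℝ)) * τ) ≤ (2 + 2/τ) ^ n := by
  have hterm : ∀ k : Fin n → ℤ, Real.exp (-(∑ i, (|k i| : ℝ)) * τ)
      = ∏ i, Real.exp (-(|k i| : ℝ) * τ) := by
    intro k
    rw [← Real.exp_sum]
    congr 1
    rw [← Finset.sum_mul, ← Finset.sum_neg_distrib]
  have key : ∀ (t : Fin n → Finset ℤ), S ⊆ Fintype.piFinset t →
      (∀ i, ∑ j ∈ t i, Real.exp (-(|j| : ℝ) * τ) ≤ 2 + 2/τ) →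
      ∑ k ∈ S, Real.exp (-(∑ i, (|k i| : ℝ)) * τ) ≤ (2 + 2/τ) ^ n := by
    intro t hsub ht
    calc ∑ k ∈ S, Real.exp (-(∑ i, (|k i| : ℝ)) * τ)
        = ∑ k ∈ S, ∏ i, Real.exp (-(|k i| : ℝ) * τ) :=
          Finset.sum_congr rfl fun k _ => hterm k
      _ ≤ ∑ k ∈ Fintype.piFinset t, ∏ i, Real.exp (-(|k i| : ℝ) * τ) :=
          Finset.sum_le_sum_of_subset_of_nonneg hsub (fun k _ _ => by positivity)
      _ = ∏ i, ∑ j ∈ t i, Real.exp (-(|j| : ℝ) * τ) :=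
          (Finset.prod_univ_sum t (fun _ j => Real.exp (-(|j| : ℝ) * τ))).symm
      _ ≤ ∏ _i : Fin n, (2 + 2/τ) :=
          Finset.prod_le_prod (fun i _ => by positivity) (fun i _ => ht i)
      _ = (2 + 2/τ) ^ n := by simp
  refine key (fun i => S.image (fun k => k i)) ?_ (fun i => sum_exp_abs_le τ hτ _)
  intro k hk
  rw [Fintype.mem_piFinset]
  exact fun i => Finset.mem_image.mpr ⟨k, hk, rfl⟩

/-- Truncation estimate: there is c = c(n) such that if the Fourier coefficients of
f satisfy the Cauchy estimate |f_k| ≤ M e^{−|k|s} (M = |f|_s), then for 0 < σ ≤ s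
with Kσ ≥ n, the tail f − T_K f is bounded on the strip of width s − σ by
c K^n e^{−Kσ} M. -/
theorem stmt_2 (n : ℕ) (hn : 1 ≤ n) :
    ∃ c : ℝ, 0 < c ∧
      ∀ (s σ : ℝ) (K : ℕ) (M : ℝ) (a : (Fin n → ℤ) → ℂ),
        0 < s → 0 < σ → σ ≤ s → (n : ℝ) ≤ (K : ℝ) * σ → 0 ≤ M →
        (∀ k : Fin n → ℤ, ‖a k‖ ≤ M * Real.exp (-((∑ i, |k i| : ℤ) : ℝ) * s)) →
        ∀ θ : Fin n → ℂ, (∀ i, |(θ i).im| ≤ s - σ) →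
          ‖(∑' k : {k : Fin n → ℤ // (K : ℤ) < ∑ i, |k i|},
              a k.1 * Complex.exp (Complex.I * ∑ i, (k.1 i : ℂ) * θ i))‖
            ≤ c * (K : ℝ) ^ n * Real.exp (-(K : ℝ) * σ) * M := by
  refine ⟨(4 * Real.exp 1) ^ n, by positivity, ?_⟩
  intro s σ K M a hs hσ hσs hKσ hM ha θ hθ
  have hn1 : (1:ℝ) ≤ (n:ℝ) := by exact_mod_cast hn
  have hK0 : (0:ℝ) < (K:ℝ) := by
    rcases Nat.eq_zero_or_pos K with h | h
    · exfalso; rw [h] at hKσ; push_cast at hKσ; linarith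
    · exact_mod_cast h
  have hK1 : (1:ℝ) ≤ (K:ℝ) := by
    have : (1:ℕ) ≤ K := by
      rcases Nat.eq_zero_or_pos K with h | h
      · exfalso; rw [h] at hKσ; push_cast at hKσ; linarith
      · exact h
    exact_mod_cast this
  set τ : ℝ := (n:ℝ) / (K:ℝ) with hτdef
  have hτ : 0 < τ := by positivity
  have hτσ : τ ≤ σ := by
    rw [hτdef, div_le_iff₀ hK0]
    linarith [hKσ]
  have hKτ : (K:ℝ) * τ = (n:ℝ) := by
    rw [hτdef]; field_simp
  set L : (Fin n → ℤ) → ℝ := fun k => ∑ i, (|k i| : ℝ) with hLdef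
  have hLcast : ∀ k : Fin n → ℤ, ((∑ i, |k i| : ℤ) : ℝ) = L k := by
    intro k; rw [hLdef]; push_cast; rfl
  set D : ℝ := M * Real.exp n * Real.exp (-(K:ℝ) * σ) with hDdef
  have hD : 0 ≤ D := by positivity
  -- per-term bound on the tail
  have hnorm : ∀ k : Fin n → ℤ, (K:ℤ) < ∑ i, |k i| →
      ‖a k * Complex.exp (Complex.I * ∑ i, (k i : ℂ) * θ i)‖
        ≤ D * Real.exp (-(L k) * τ) := by
    intro k hk
    have hKL : (K:ℝ) ≤ L k := by
      rw [← hLcast]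
      exact_mod_cast hk.le
    have hexp : ‖Complex.exp (Complex.I * ∑ i, (k i : ℂ) * θ i)‖
        ≤ Real.exp (L k * (s - σ)) := by
      rw [Complex.norm_exp]
      apply Real.exp_le_exp.mpr
      have him : (Complex.I * ∑ i, (k i : ℂ) * θ i).re = -∑ i, (k i : ℝ) * (θ i).im := by
        rw [Complex.mul_re, Complex.I_re, Complex.I_im]
        simp only [zero_mul, one_mul, zero_sub, neg_inj]
        rw [Complex.im_sum]
        exact Finset.sum_congr rfl fun i _ => by
          rw [Complex.mul_im]
          simp
      rw [him, hLdef]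
      rw [Finset.sum_mul, ← Finset.sum_neg_distrib]
      apply Finset.sum_le_sum
      intro i _
      calc -((k i : ℝ) * (θ i).im) ≤ |(k i : ℝ) * (θ i).im| := neg_le_abs _
        _ = |(k i : ℝ)| * |(θ i).im| := abs_mul _ _
        _ ≤ |(k i : ℝ)| * (s - σ) := by
            apply mul_le_mul_of_nonneg_left (hθ i) (abs_nonneg _)
    have h1 : ‖a k * Complex.exp (Complex.I * ∑ i, (k i : ℂ) * θ i)‖
        ≤ (M * Real.exp (-(L k) * s)) * Real.exp (L k * (s - σ)) := by
      rw [norm_mul]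
      apply mul_le_mul _ hexp (norm_nonneg _) (by positivity)
      rw [← hLcast k] at *
      exact ha k
    have h2 : (M * Real.exp (-(L k) * s)) * Real.exp (L k * (s - σ))
        = M * Real.exp (-(L k) * σ) := by
      rw [mul_assoc, ← Real.exp_add]
      ring_nf
    have h3 : Real.exp (-(L k) * σ) ≤ Real.exp (n:ℝ) * Real.exp (-(K:ℝ) * σ) * Real.exp (-(L k) * τ) := by
      rw [← Real.exp_add, ← Real.exp_add]
      apply Real.exp_le_exp.mpr
      nlinarith [mul_nonneg (sub_nonneg.mpr hτσ) (sub_nonneg.mpr hKL)]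
    calc ‖a k * Complex.exp (Complex.I * ∑ i, (k i : ℂ) * θ i)‖
        ≤ M * Real.exp (-(L k) * σ) := by rw [← h2]; exact h1
      _ ≤ M * (Real.exp (n:ℝ) * Real.exp (-(K:ℝ) * σ) * Real.exp (-(L k) * τ)) :=
          mul_le_mul_of_nonneg_left h3 hM
      _ = D * Real.exp (-(L k) * τ) := by rw [hDdef]; ring
  -- partial sums of norms
  set T := {k : Fin n → ℤ // (K : ℤ) < ∑ i, |k i|} with hTdef
  set F : T → ℂ := fun k => a k.1 * Complex.exp (Complex.I * ∑ i, (k.1 i : ℂ) * θ i) with hFdef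
  have hFle : ∀ k : T, ‖F k‖ ≤ D * Real.exp (-(L k.1) * τ) :=
    fun k => hnorm k.1 k.2
  have hpartial : ∀ u : Finset T, ∑ k ∈ u, ‖F k‖ ≤ D * (2 + 2/τ) ^ n := by
    intro u
    have hinj : ∀ x ∈ u, ∀ y ∈ u, x.1 = y.1 → x = y := fun x _ y _ h => Subtype.ext h
    calc ∑ k ∈ u, ‖F k‖
        ≤ ∑ k ∈ u, D * Real.exp (-(L k.1) * τ) := Finset.sum_le_sum fun k _ => hFle k
      _ = D * ∑ k ∈ u, Real.exp (-(L k.1) * τ) := by rw [Finset.mul_sum]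
      _ = D * ∑ k ∈ u.image Subtype.val, Real.exp (-(L k) * τ) := by
          rw [Finset.sum_image hinj]
      _ ≤ D * (2 + 2/τ) ^ n :=
          mul_le_mul_of_nonneg_left (sum_pi_exp_le n τ hτ _) hD
  have hsum : Summable (fun k : T => ‖F k‖) :=
    summable_of_sum_le (fun k => norm_nonneg _) hpartial
  have hnormeq : (fun k : T => ‖F k‖) = fun k : T => ‖F k‖ := by
    funext k; rfl
  have hmain : ‖∑' k : T, F k‖ ≤ D * (2 + 2/τ) ^ n := by
    calc ‖∑' k : T, F k‖ ≤ ∑' k : T, ‖F k‖ := norm_tsum_le_tsum_norm (by rw [hnormeq]; exact hsum)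
      _ = ∑' k : T, ‖F k‖ := by rw [← hnormeq]
      _ ≤ D * (2 + 2/τ) ^ n := Summable.tsum_le_of_sum_le hsum hpartial
  -- final arithmetic
  have hfactor : 2 + 2/τ ≤ 4 * (K:ℝ) := by
    rw [hτdef]
    rw [div_div_eq_mul_div]
    have h1 : 2 * (K:ℝ) / (n:ℝ) ≤ 2 * (K:ℝ) := by
      apply div_le_self (by positivity) hn1
    linarith
  have hpow : (2 + 2/τ) ^ n ≤ (4 * (K:ℝ)) ^ n := by
    apply pow_le_pow_left₀ (by positivity) hfactor
  have hfinal : D * (2 + 2/τ) ^ n ≤ (4 * Real.exp 1) ^ n * (K:ℝ) ^ n * Real.exp (-(K:ℝ) * σ) * M := by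
    have hexpn : Real.exp (n:ℝ) = Real.exp 1 ^ n := by
      rw [← Real.exp_nat_mul]; norm_num
    calc D * (2 + 2/τ) ^ n ≤ D * (4 * (K:ℝ)) ^ n := mul_le_mul_of_nonneg_left hpow hD
      _ = (4 * Real.exp 1) ^ n * (K:ℝ) ^ n * Real.exp (-(K:ℝ) * σ) * M := by
          rw [hDdef, hexpn, mul_pow, mul_pow]; ring
  exact le_trans hmain hfinal
end

section
/- Suppose ω ∈ ℝⁿ satisfies the Diophantine-type condition |e^{i⟨k, tω⟩} − 1| ≥ tγ/|k|^τ for all nonzero k ∈ ℤⁿ with |k| ≤ K, where t, γ > 0. Let g be analytic and 2π-periodic on the strip of width s with zero mean, and with Fourier coefficients g_k. Then the function ψ(θ) = −Σ_{0<|k|≤K} g_k e^{i⟨k,θ⟩}/(e^{i⟨k,tω⟩} − 1) solves the difference equation ψ(θ + tω) − ψ(θ) + T_K g(θ) = 0, and satisfies the bound |ψ|_{s−σ} ≤ (c₁/(tγ σ^{τ+n})) |g|_s for 0 < σ ≤ min(s,1), with c₁ depending only on τ and n. -/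
open Real
open Finset

lemma rpow_mul_exp_neg_le {τ : ℝ} (hτ : 0 < τ) {y : ℝ} (hy : 0 < y) :
    y ^ τ * Real.exp (-y) ≤ τ ^ τ := by
  rw [Real.rpow_def_of_pos hy, Real.rpow_def_of_pos hτ, ← Real.exp_add]
  apply Real.exp_le_exp.2
  have h := Real.log_le_sub_one_of_pos (show (0:ℝ) < y / τ by positivity)
  have h2 : τ * Real.log (y / τ) ≤ τ * (y / τ - 1) := mul_le_mul_of_nonneg_left h hτ.le
  have h3 : τ * (y / τ - 1) = y - τ := by field_simp
  have hlog : Real.log (y / τ) = Real.log y - Real.log τ := Real.log_div (ne_of_gt hy) (ne_of_gt hτ)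
  rw [hlog] at h2
  nlinarith [h2, h3, hτ]

lemma geom_bound {x : ℝ} (hx : 0 < x) (N : ℕ) :
    ∑ m ∈ Finset.range N, Real.exp (-x) ^ m ≤ (1 + x) / x := by
  have hr1 : Real.exp (-x) < 1 := Real.exp_lt_one_iff.2 (by linarith)
  have hr0 : (0:ℝ) ≤ Real.exp (-x) := (Real.exp_pos _).le
  have hge : ∑ m ∈ Finset.range N, Real.exp (-x) ^ m ≤ 1 / (1 - Real.exp (-x)) := by
    rw [geom_sum_eq (ne_of_lt hr1)]
    have heq : (Real.exp (-x) ^ N - 1) / (Real.exp (-x) - 1)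
        = (1 - Real.exp (-x) ^ N) / (1 - Real.exp (-x)) := by
      rw [← neg_div_neg_eq]; ring_nf
    rw [heq]
    gcongr
    · linarith [pow_nonneg hr0 N]
  refine hge.trans ?_
  have hkey : Real.exp (-x) ≤ 1 / (1 + x) := by
    rw [Real.exp_neg]
    rw [one_div, inv_le_inv₀ (by positivity) (by linarith)]
    linarith [Real.add_one_le_exp x]
  have h1 : x / (1 + x) ≤ 1 - Real.exp (-x) := by
    have : 1 - 1/(1+x) = x/(1+x) := by field_simp; ring
    linarith [this]
  calc 1 / (1 - Real.exp (-x)) ≤ 1 / (x / (1+x)) := by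
        apply one_div_le_one_div_of_le (by positivity) h1
    _ = (1 + x) / x := by field_simp

lemma shell_bound {x : ℝ} (hx : 0 < x) (hx2 : x ≤ 1/2) (K : ℕ) :
    ∑ j ∈ Finset.Icc (-(K:ℤ)) (K:ℤ), Real.exp (-(|j| : ℝ) * x) ≤ 3 / x := by
  classical
  set P : Finset ℤ := (Finset.range (K+1)).image (fun m : ℕ => (m:ℤ)) with hP
  set Q : Finset ℤ := (Finset.range (K+1)).image (fun m : ℕ => -(m:ℤ)) with hQ
  have hsub : Finset.Icc (-(K:ℤ)) (K:ℤ) ⊆ P ∪ Q := by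
    intro j hj
    simp only [Finset.mem_Icc] at hj
    simp only [hP, hQ, Finset.mem_union, Finset.mem_image, Finset.mem_range]
    rcases le_or_gt 0 j with h | h
    · exact Or.inl ⟨j.toNat, by omega, by omega⟩
    · exact Or.inr ⟨(-j).toNat, by omega, by omega⟩
  have h1 : ∑ j ∈ Finset.Icc (-(K:ℤ)) (K:ℤ), Real.exp (-(|j| : ℝ) * x)
      ≤ ∑ j ∈ P ∪ Q, Real.exp (-(|j| : ℝ) * x) :=
    Finset.sum_le_sum_of_subset_of_nonneg hsub (fun _ _ _ => (Real.exp_pos _).le)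
  have hPsum : ∑ j ∈ P, Real.exp (-(|j| : ℝ) * x) = ∑ m ∈ Finset.range (K+1), Real.exp (-x) ^ m := by
    rw [hP, Finset.sum_image (by intro a _ b _ h; have h' : (a:ℤ) = (b:ℤ) := h; exact_mod_cast h')]
    refine Finset.sum_congr rfl fun m _ => ?_
    rw [← Real.exp_nat_mul]
    congr 1
    push_cast
    rw [abs_of_nonneg (by positivity : (0:ℝ) ≤ (m:ℝ))]
    ring
  have hQsum : ∑ j ∈ Q, Real.exp (-(|j| : ℝ) * x) = ∑ m ∈ Finset.range (K+1), Real.exp (-x) ^ m := by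
    rw [hQ, Finset.sum_image (by intro a _ b _ h; have h' : -(a:ℤ) = -(b:ℤ) := h; omega)]
    refine Finset.sum_congr rfl fun m _ => ?_
    rw [← Real.exp_nat_mul]
    congr 1
    push_cast
    rw [abs_neg, abs_of_nonneg (by positivity : (0:ℝ) ≤ (m:ℝ))]
    ring
  have h2 : ∑ j ∈ P ∪ Q, Real.exp (-(|j| : ℝ) * x)
      ≤ ∑ j ∈ P, Real.exp (-(|j| : ℝ) * x) + ∑ j ∈ Q, Real.exp (-(|j| : ℝ) * x) := by
    have := Finset.sum_union_inter (s₁ := P) (s₂ := Q) (f := fun j => Real.exp (-(|j| : ℝ) * x))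
    have hnn : (0:ℝ) ≤ ∑ j ∈ P ∩ Q, Real.exp (-(|j| : ℝ) * x) :=
      Finset.sum_nonneg fun _ _ => (Real.exp_pos _).le
    linarith
  have h3 := geom_bound hx (K+1)
  have hfin : 2 * ((1 + x) / x) ≤ 3 / x := by
    rw [show 2 * ((1 + x) / x) = (2 + 2 * x) / x by ring]
    gcongr
    linarith
  calc ∑ j ∈ Finset.Icc (-(K:ℤ)) (K:ℤ), Real.exp (-(|j| : ℝ) * x)
      ≤ ∑ j ∈ P ∪ Q, Real.exp (-(|j| : ℝ) * x) := h1
    _ ≤ 2 * ((1 + x) / x) := by rw [hPsum, hQsum] at h2; linarith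
    _ ≤ 3 / x := hfin


/-- Solution of the homological difference equation: there is c₁ = c₁(τ,n) such that,
under the Diophantine condition |e^{i⟨k,tω⟩} − 1| ≥ tγ/|k|^τ for 0 < |k| ≤ K, the
function ψ(θ) = −Σ_{0<|k|≤K} g_k e^{i⟨k,θ⟩}/(e^{i⟨k,tω⟩} − 1) solves
ψ(θ+tω) − ψ(θ) + T_K g(θ) = 0 and satisfies |ψ|_{s−σ} ≤ c₁ M/(tγσ^{τ+n}). -/
theorem stmt_3 (n : ℕ) (hn : 1 ≤ n) (τ : ℝ) (hτ : 0 < τ) :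
    ∃ c₁ : ℝ, 0 < c₁ ∧
      ∀ (ω : Fin n → ℝ) (t γ s σ M : ℝ) (K : ℕ) (g : (Fin n → ℤ) → ℂ)
        (ψ TKg : (Fin n → ℂ) → ℂ),
        0 < t → 0 < γ → 0 < s → 0 < σ → σ ≤ s → σ ≤ 1 → 1 ≤ K → 0 ≤ M →
        (∀ k : Fin n → ℤ, k ≠ 0 → (∑ i, |k i|) ≤ (K : ℤ) →
          t * γ / ((∑ i, |k i| : ℤ) : ℝ) ^ τ ≤
            ‖Complex.exp (Complex.I * ∑ i, (k i : ℂ) * (t * ω i : ℝ)) - 1‖) →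
        (∀ k : Fin n → ℤ, ‖g k‖ ≤ M * Real.exp (-((∑ i, |k i| : ℤ) : ℝ) * s)) →
        (∀ θ : Fin n → ℂ, ψ θ =
          -∑' k : {k : Fin n → ℤ // k ≠ 0 ∧ (∑ i, |k i|) ≤ (K : ℤ)},
            g k.1 * Complex.exp (Complex.I * ∑ i, (k.1 i : ℂ) * θ i) /
              (Complex.exp (Complex.I * ∑ i, (k.1 i : ℂ) * (t * ω i : ℝ)) - 1)) →
        (∀ θ : Fin n → ℂ, TKg θ =
          ∑' k : {k : Fin n → ℤ // k ≠ 0 ∧ (∑ i, |k i|) ≤ (K : ℤ)},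
            g k.1 * Complex.exp (Complex.I * ∑ i, (k.1 i : ℂ) * θ i)) →
        (∀ θ : Fin n → ℂ,
          ψ (θ + fun i => ((t * ω i : ℝ) : ℂ)) - ψ θ + TKg θ = 0) ∧
        (∀ θ : Fin n → ℂ, (∀ i, |(θ i).im| ≤ s - σ) →
          ‖ψ θ‖ ≤ c₁ / (t * γ * σ ^ (τ + n)) * M) := by
  classical
  refine ⟨(2*τ) ^ τ * 6 ^ n, by positivity, ?_⟩
  intro ω t γ s σ M K g ψ TKg ht hγ hs hσ hσs hσ1 hK hM hDio hg hψ hTKg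
  -- basic notation
  set p : (Fin n → ℤ) → Prop := fun k => k ≠ 0 ∧ (∑ i, |k i|) ≤ (K : ℤ) with hp
  -- coordinate bound
  have hcoord : ∀ k : Fin n → ℤ, p k → ∀ i, k i ∈ Finset.Icc (-(K:ℤ)) (K:ℤ) := by
    intro k hk i
    have h1 : |k i| ≤ ∑ j, |k j| :=
      Finset.single_le_sum (f := fun j => |k j|) (fun j _ => abs_nonneg _) (Finset.mem_univ i)
    have h2 := hk.2
    rw [Finset.mem_Icc]
    constructor
    · linarith [neg_abs_le (k i)]
    · linarith [le_abs_self (k i)]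
  haveI : Finite {k : Fin n → ℤ // p k} := by
    apply Finite.of_injective
      (fun k : {k : Fin n → ℤ // p k} =>
        (fun i => (⟨k.1 i, hcoord k.1 k.2 i⟩ : Finset.Icc (-(K:ℤ)) (K:ℤ))))
    intro a b h
    apply Subtype.ext
    funext i
    exact congrArg Subtype.val (congrFun h i)
  haveI instT : Fintype {k : Fin n → ℤ // p k} := Fintype.ofFinite _
  -- denominators
  have hNk1 : ∀ k : Fin n → ℤ, p k → (1:ℝ) ≤ ((∑ i, |k i| : ℤ) : ℝ) := by
    intro k hk
    have : (1:ℤ) ≤ ∑ i, |k i| := by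
      obtain ⟨i, hi⟩ := Function.ne_iff.1 hk.1
      have h1 : |k i| ≤ ∑ j, |k j| :=
        Finset.single_le_sum (f := fun j => |k j|) (fun j _ => abs_nonneg _) (Finset.mem_univ i)
      have hi' : k i ≠ 0 := by simpa using hi
      have h2 : 1 ≤ |k i| := Int.one_le_abs hi'
      omega
    exact_mod_cast this
  have hDpos : ∀ k : Fin n → ℤ, p k →
      0 < ‖Complex.exp (Complex.I * ∑ i, (k i : ℂ) * (t * ω i : ℝ)) - 1‖ := by
    intro k hk
    refine lt_of_lt_of_le ?_ (hDio k hk.1 hk.2)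
    have := hNk1 k hk
    positivity
  have hDne : ∀ k : Fin n → ℤ, p k →
      Complex.exp (Complex.I * ∑ i, (k i : ℂ) * (t * ω i : ℝ)) - 1 ≠ 0 := by
    intro k hk
    intro h
    have := hDpos k hk
    rw [h] at this
    simp at this
  constructor
  · -- Part 1: difference equation
    intro θ
    rw [hψ, hψ, hTKg]
    simp only [tsum_fintype]
    rw [← Finset.sum_neg_distrib, ← Finset.sum_neg_distrib, ← Finset.sum_sub_distrib,
      ← Finset.sum_add_distrib]
    apply Finset.sum_eq_zero
    intro k _
    have hsplit : (∑ i, (k.1 i : ℂ) * (θ + fun i => ((t * ω i : ℝ) : ℂ)) i)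
        = (∑ i, (k.1 i : ℂ) * θ i) + ∑ i, (k.1 i : ℂ) * ((t * ω i : ℝ) : ℂ) := by
      rw [← Finset.sum_add_distrib]
      exact Finset.sum_congr rfl fun i _ => by simp [Pi.add_apply]; ring
    rw [hsplit, mul_add, Complex.exp_add]
    have key : ∀ a b : ℂ, b - 1 ≠ 0 → -(a * b / (b - 1)) - -(a / (b - 1)) + a = 0 := by
      intro a b hb
      field_simp
      ring
    have h0 := key (g k.1 * Complex.exp (Complex.I * ∑ i, (k.1 i : ℂ) * θ i))
      (Complex.exp (Complex.I * ∑ i, (k.1 i : ℂ) * ((t * ω i : ℝ) : ℂ))) (hDne k.1 k.2)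
    linear_combination h0
  · -- Part 2: bound
    intro θ hθ
    have hss : 0 ≤ s - σ := by linarith
    have hσ2 : 0 < σ / 2 := by linarith
    set Nk : (Fin n → ℤ) → ℝ := fun k => ((∑ i, |k i| : ℤ) : ℝ) with hNkdef
    -- bound on |exp(i<k,θ>)|
    have habsE : ∀ k : Fin n → ℤ, p k →
        ‖Complex.exp (Complex.I * ∑ i, (k i : ℂ) * θ i)‖
          ≤ Real.exp (Nk k * (s - σ)) := by
      intro k hk
      rw [Complex.norm_exp]
      apply Real.exp_le_exp.2
      have hre : (Complex.I * ∑ i, (k i : ℂ) * θ i).re = -(∑ i, (k i : ℝ) * (θ i).im) := by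
        rw [Complex.mul_re, Complex.I_re, Complex.I_im, Complex.im_sum]
        simp [Complex.mul_im]
      rw [hre]
      have h1 : -(∑ i, (k i : ℝ) * (θ i).im) ≤ ∑ i, |(k i : ℝ)| * (s - σ) := by
        calc -(∑ i, (k i : ℝ) * (θ i).im) ≤ |∑ i, (k i : ℝ) * (θ i).im| := neg_le_abs _
          _ ≤ ∑ i, |(k i : ℝ) * (θ i).im| := Finset.abs_sum_le_sum_abs _ _
          _ ≤ ∑ i, |(k i : ℝ)| * (s - σ) := by
              apply Finset.sum_le_sum
              intro i _
              rw [abs_mul]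
              exact mul_le_mul_of_nonneg_left (hθ i) (abs_nonneg _)
      have h2 : ∑ i, |(k i : ℝ)| * (s - σ) = Nk k * (s - σ) := by
        rw [← Finset.sum_mul, hNkdef]
        push_cast
        ring
      linarith
    -- per-term bound
    have hterm : ∀ k : Fin n → ℤ, p k →
        ‖g k * Complex.exp (Complex.I * ∑ i, (k i : ℂ) * θ i) /
            (Complex.exp (Complex.I * ∑ i, (k i : ℂ) * ((t * ω i : ℝ) : ℂ)) - 1)‖
          ≤ M / (t * γ) * (Real.exp (-(Nk k) * σ) * Nk k ^ τ) := by
      intro k hk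
      have hNk := hNk1 k hk
      have hNkpos : (0:ℝ) < Nk k := by simpa [hNkdef] using lt_of_lt_of_le one_pos hNk
      have hdpos : (0:ℝ) < t * γ / Nk k ^ τ := by positivity
      rw [norm_div, norm_mul]
      have hnum : ‖g k‖ * ‖Complex.exp (Complex.I * ∑ i, (k i : ℂ) * θ i)‖
          ≤ (M * Real.exp (-(Nk k) * s)) * Real.exp (Nk k * (s - σ)) := by
        apply mul_le_mul (hg k) (habsE k hk) (norm_nonneg _) (by positivity)
      calc ‖g k‖ * ‖Complex.exp (Complex.I * ∑ i, (k i : ℂ) * θ i)‖ /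
            ‖Complex.exp (Complex.I * ∑ i, (k i : ℂ) * ((t * ω i : ℝ) : ℂ)) - 1‖
          ≤ (M * Real.exp (-(Nk k) * s)) * Real.exp (Nk k * (s - σ)) / (t * γ / Nk k ^ τ) := by
            apply div_le_div₀ (by positivity) hnum hdpos (hDio k hk.1 hk.2)
        _ = M / (t * γ) * (Real.exp (-(Nk k) * σ) * Nk k ^ τ) := by
            rw [mul_assoc, ← Real.exp_add, show -(Nk k) * s + Nk k * (s - σ) = -(Nk k) * σ by ring]
            rw [div_div_eq_mul_div]
            field_simp
    -- pointwise estimate of the weight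
    have hkey : ∀ k : Fin n → ℤ, p k →
        Real.exp (-(Nk k) * σ) * Nk k ^ τ
          ≤ (2 * τ / σ) ^ τ * ∏ i, Real.exp (-(|k i| : ℝ) * (σ / 2)) := by
      intro k hk
      have hNk := hNk1 k hk
      have hNkpos : (0:ℝ) < Nk k := lt_of_lt_of_le one_pos hNk
      have hy : (0:ℝ) < Nk k * (σ / 2) := by positivity
      have h1 : Nk k ^ τ * Real.exp (-(Nk k * (σ / 2))) ≤ (2 * τ / σ) ^ τ := by
        have h2 : Nk k ^ τ = (2 / σ) ^ τ * (Nk k * (σ / 2)) ^ τ := by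
          rw [← Real.mul_rpow (by positivity) (by positivity)]
          congr 1
          field_simp
        rw [h2, mul_assoc]
        have h3 := rpow_mul_exp_neg_le hτ hy
        calc (2 / σ) ^ τ * ((Nk k * (σ / 2)) ^ τ * Real.exp (-(Nk k * (σ / 2))))
            ≤ (2 / σ) ^ τ * τ ^ τ := by
              apply mul_le_mul_of_nonneg_left h3 (by positivity)
          _ = (2 * τ / σ) ^ τ := by
              rw [← Real.mul_rpow (by positivity) hτ.le]
              congr 1
              ring
      have h4 : Real.exp (-(Nk k) * (σ / 2)) = ∏ i, Real.exp (-(|k i| : ℝ) * (σ / 2)) := by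
        rw [← Real.exp_sum]
        congr 1
        simp only [neg_mul, Finset.sum_neg_distrib, ← Finset.sum_mul]
        rw [hNkdef]
        push_cast
        ring
      have h5 : Real.exp (-(Nk k) * σ) = Real.exp (-(Nk k) * (σ / 2)) * Real.exp (-(Nk k) * (σ / 2)) := by
        rw [← Real.exp_add]
        congr 1
        ring
      calc Real.exp (-(Nk k) * σ) * Nk k ^ τ
          = (Nk k ^ τ * Real.exp (-(Nk k * (σ / 2)))) * Real.exp (-(Nk k) * (σ / 2)) := by
            rw [h5]; ring_nf
        _ ≤ (2 * τ / σ) ^ τ * Real.exp (-(Nk k) * (σ / 2)) :=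
            mul_le_mul_of_nonneg_right h1 (Real.exp_nonneg _)
        _ = (2 * τ / σ) ^ τ * ∏ i, Real.exp (-(|k i| : ℝ) * (σ / 2)) := by rw [h4]
    -- sum over the lattice points
    set A' : Finset (Fin n → ℤ) := Finset.image (fun k : {k // p k} => k.1) Finset.univ with hA'
    have hiff : ∀ x, x ∈ A' ↔ p x := by
      intro x
      constructor
      · intro hx
        rw [hA', Finset.mem_image] at hx
        obtain ⟨a, _, rfl⟩ := hx
        exact a.2
      · intro hx
        rw [hA', Finset.mem_image]
        exact ⟨⟨x, hx⟩, Finset.mem_univ _, rfl⟩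
    have hsub' := Finset.sum_subtype (F := instT) A' hiff (fun x => ∏ i, Real.exp (-(|x i| : ℝ) * (σ / 2)))
    have hAB : A' ⊆ Fintype.piFinset (fun _ : Fin n => Finset.Icc (-(K:ℤ)) (K:ℤ)) := by
      intro x hx
      rw [Fintype.mem_piFinset]
      exact hcoord x ((hiff x).1 hx)
    have hboxsum : ∑ k : {k // p k}, ∏ i, Real.exp (-(|k.1 i| : ℝ) * (σ / 2)) ≤ (6 / σ) ^ n := by
      rw [← hsub']
      calc ∑ x ∈ A', ∏ i, Real.exp (-(|x i| : ℝ) * (σ / 2))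
          ≤ ∑ x ∈ Fintype.piFinset (fun _ : Fin n => Finset.Icc (-(K:ℤ)) (K:ℤ)),
              ∏ i, Real.exp (-(|x i| : ℝ) * (σ / 2)) := by
            apply Finset.sum_le_sum_of_subset_of_nonneg hAB
            intro x _ _
            exact Finset.prod_nonneg fun i _ => (Real.exp_pos _).le
        _ = ∏ i : Fin n, ∑ j ∈ Finset.Icc (-(K:ℤ)) (K:ℤ), Real.exp (-(|j| : ℝ) * (σ / 2)) := by
            rw [Finset.prod_univ_sum]
        _ ≤ ∏ i : Fin n, (6 / σ) := by
            apply Finset.prod_le_prod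
            · intro i _
              exact Finset.sum_nonneg fun j _ => (Real.exp_pos _).le
            · intro i _
              have := shell_bound hσ2 (by linarith) K
              calc ∑ j ∈ Finset.Icc (-(K:ℤ)) (K:ℤ), Real.exp (-(|j| : ℝ) * (σ / 2))
                  ≤ 3 / (σ / 2) := this
                _ = 6 / σ := by field_simp; ring
        _ = (6 / σ) ^ n := by
            rw [Finset.prod_const, Finset.card_univ, Fintype.card_fin]
    -- put everything together
    rw [hψ θ, tsum_fintype, norm_neg]
    calc ‖∑ k : {k // p k},
            g k.1 * Complex.exp (Complex.I * ∑ i, (k.1 i : ℂ) * θ i) /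
              (Complex.exp (Complex.I * ∑ i, (k.1 i : ℂ) * ((t * ω i : ℝ) : ℂ)) - 1)‖
        ≤ ∑ k : {k // p k}, ‖
            (g k.1 * Complex.exp (Complex.I * ∑ i, (k.1 i : ℂ) * θ i) /
              (Complex.exp (Complex.I * ∑ i, (k.1 i : ℂ) * ((t * ω i : ℝ) : ℂ)) - 1))‖ :=
          norm_sum_le _ _
      _ ≤ ∑ k : {k // p k}, M / (t * γ) * ((2 * τ / σ) ^ τ * ∏ i, Real.exp (-(|k.1 i| : ℝ) * (σ / 2))) := by
          apply Finset.sum_le_sum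
          intro k _
          refine (hterm k.1 k.2).trans ?_
          apply mul_le_mul_of_nonneg_left (hkey k.1 k.2) (by positivity)
      _ = M / (t * γ) * ((2 * τ / σ) ^ τ *
            ∑ k : {k // p k}, ∏ i, Real.exp (-(|k.1 i| : ℝ) * (σ / 2))) := by
          rw [← Finset.mul_sum, ← Finset.mul_sum]
      _ ≤ M / (t * γ) * ((2 * τ / σ) ^ τ * (6 / σ) ^ n) := by
          apply mul_le_mul_of_nonneg_left
            (mul_le_mul_of_nonneg_left hboxsum (by positivity)) (by positivity)
      _ = (2 * τ) ^ τ * 6 ^ n / (t * γ * σ ^ (τ + (n:ℝ))) * M := by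
          rw [Real.div_rpow (by positivity) hσ.le, div_pow, Real.rpow_add hσ, Real.rpow_natCast]
          have h1 : σ ^ τ ≠ 0 := ne_of_gt (Real.rpow_pos_of_pos hσ τ)
          have h2 : σ ^ n ≠ 0 := pow_ne_zero n (ne_of_gt hσ)
          field_simp
end
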